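/- Let n ≥ 1 and l ≥ 0 be integers and let w be a further indeterminate. Then, in the field ℚ(w, X_1,…,X_n), det_{1≤i,j≤n}( X_i^{j−l−n−1}(1+X_i)^{j−1}(1+wX_i)^{n−j} − X_i^{−j+l+n}(1+X_i^{−1})^{j−1}(1+wX_i^{−1})^{n−j} ) = ∏_{1≤i<j≤n}(X_j + X_j^{−1} − X_i − X_i^{−1}) · ∏_{i=1}^n (1 − X_i^{−1}) · det_{1≤i,j≤n}( b_{i,j} ), where b_{i,j} = Σ_{p=0}^{j−1} Σ_{q=0}^{n−j} w^{n−j−q} C(j−1,p) C(n−j,q) · [ sgn(p−q−l) · h_{|p−q−l|−i}(X_1, X_1^{−1}, …, X_i, X_i^{−1}) + sgn(p−q−l−1) · h_{|p−q−l−1|−i}(X_1, X_1^{−1}, …, X_i, X_i^{−1}) ]. -/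

import Mathlib

noncomputable section

/-- The complete homogeneous symmetric polynomial `h_d(Y_1,…,Y_N)`: the sum of all
monomials of degree `d`. -/
def hcomp {A : Type*} [CommRing A] (N d : ℕ) (Y : Fin N → A) : A :=
  ∑ k ∈ Finset.univ.filter (fun k : Fin N → Fin (d + 1) => ∑ i, (k i : ℕ) = d),
    ∏ i, Y i ^ (k i : ℕ)

/-- `h_d` for `d ∈ ℤ`, with `h_d = 0` for `d < 0`. -/
def hz {A : Type*} [CommRing A] (N : ℕ) (d : ℤ) (Y : Fin N → A) : A :=
  if 0 ≤ d then hcomp N d.toNat Y else 0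

/-- The field `ℚ(w, X_1, …, X_n)` of rational functions. -/
abbrev RF (n : ℕ) : Type := FractionRing (MvPolynomial (Fin n ⊕ Unit) ℚ)

/-- The variable `X_i`. -/
def Xv (n : ℕ) (i : Fin n) : RF n :=
  algebraMap (MvPolynomial (Fin n ⊕ Unit) ℚ) (RF n) (MvPolynomial.X (Sum.inl i))

/-- The variable `w`. -/
def wv (n : ℕ) : RF n :=
  algebraMap (MvPolynomial (Fin n ⊕ Unit) ℚ) (RF n) (MvPolynomial.X (Sum.inr ()))

/-- The `2(i+1)` arguments `X_1, X_1⁻¹, …, X_{i+1}, X_{i+1}⁻¹` (0-indexed `i < n`). -/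
def args (n i : ℕ) (hi : i < n) : Fin (2 * (i + 1)) → RF n := fun t =>
  if t.1 % 2 = 0 then Xv n ⟨t.1 / 2, by omega⟩ else (Xv n ⟨t.1 / 2, by omega⟩)⁻¹

/-- The entry `b_{i,j}` (with `i, j` 0-indexed, paper's indices being `i+1, j+1`). -/
def bent (n l : ℕ) (i j : Fin n) : RF n :=
  ∑ p ∈ Finset.range ((j : ℕ) + 1), ∑ q ∈ Finset.range (n - (j : ℕ)),
    wv n ^ (n - 1 - (j : ℕ) - q) *
      (Nat.choose (j : ℕ) p : RF n) * (Nat.choose (n - 1 - (j : ℕ)) q : RF n) *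
      (((Int.sign ((p : ℤ) - q - l) : ℤ) : RF n) *
          hz (2 * ((i : ℕ) + 1))
            ((((p : ℤ) - q - l).natAbs : ℤ) - ((i : ℕ) + 1)) (args n (i : ℕ) i.2) +
        ((Int.sign ((p : ℤ) - q - l - 1) : ℤ) : RF n) *
          hz (2 * ((i : ℕ) + 1))
            ((((p : ℤ) - q - l - 1).natAbs : ℤ) - ((i : ℕ) + 1)) (args n (i : ℕ) i.2))

section SeriesLemmas
open PowerSeries Finset

section Series
variable {K : Type*} [Field K]

def gs (y : K) : PowerSeries K := PowerSeries.mk fun m => y ^ m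
def fp (a : K) : PowerSeries K := gs a * gs a⁻¹

/-- integer-indexed coefficient -/
def czf (d : ℤ) (F : PowerSeries K) : K := if 0 ≤ d then PowerSeries.coeff d.toNat F else 0

theorem czf_ofNat (d : ℕ) (F : PowerSeries K) : czf (d : ℤ) F = PowerSeries.coeff d F := by
  simp [czf]

theorem czf_neg {d : ℤ} (hd : d < 0) (F : PowerSeries K) : czf d F = 0 := by
  simp [czf, not_le.mpr hd]

theorem czf_one_add_X (e : ℤ) (F : PowerSeries K) :
    czf e ((1 + X) * F) = czf e F + czf (e - 1) F := by
  rcases lt_trichotomy e 0 with h | h | h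
  · rw [czf_neg h, czf_neg h, czf_neg (by omega), add_zero]
  · subst h
    rw [czf_neg (by norm_num : (0:ℤ) - 1 < 0), add_zero]
    simp only [czf, le_refl, if_pos, Int.toNat_zero]
    rw [add_mul, one_mul, map_add]
    simp
  · obtain ⟨m, rfl⟩ : ∃ m : ℕ, e = (m : ℤ) + 1 := ⟨(e - 1).toNat, by omega⟩
    have h1 : ((m : ℤ) + 1).toNat = m + 1 := by omega
    have h2 : ((m : ℤ) + 1 - 1).toNat = m := by omega
    simp only [czf, if_pos (by omega : (0:ℤ) ≤ (m:ℤ)+1), if_pos (by omega : (0:ℤ) ≤ (m:ℤ)+1-1), h1, h2]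
    rw [add_mul, one_mul, map_add, coeff_succ_X_mul]

theorem czf_X_pow_mul (e : ℤ) (i : ℕ) (F : PowerSeries K) :
    czf e (X ^ i * F) = czf (e - i) F := by
  rcases le_or_gt 0 e with h | h
  · rw [czf, czf, if_pos h, coeff_X_pow_mul']
    by_cases h2 : (i : ℤ) ≤ e
    · rw [if_pos (show i ≤ e.toNat by omega), if_pos (show (0:ℤ) ≤ e - i by omega)]
      have h3 : e.toNat - i = (e - i).toNat := by omega
      rw [h3]
    · rw [if_neg (show ¬ i ≤ e.toNat by omega), if_neg (by omega)]
  · rw [czf_neg h, czf_neg (by omega)]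

theorem czf_C_mul (e : ℤ) (c : K) (F : PowerSeries K) :
    czf e (C c * F) = c * czf e F := by
  rcases le_or_gt 0 e with h | h
  · simp [czf, if_pos h]
  · simp [czf_neg h]

end Series

section Series2
variable {K : Type*} [Field K]

theorem gs_mul (a : K) : (1 - C a * X) * gs a = 1 := by
  ext n
  rw [sub_mul, one_mul, map_sub]
  cases n with
  | zero => simp [gs]
  | succ m =>
    rw [mul_comm (C a) X, mul_assoc, coeff_succ_X_mul, PowerSeries.coeff_C_mul]
    simp [gs, pow_succ, mul_comm]

def pq (a : K) : PowerSeries K := 1 - C (a + a⁻¹) * X + X ^ 2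

theorem pq_eq {a : K} (ha : a ≠ 0) : pq a = (1 - C a * X) * (1 - C a⁻¹ * X) := by
  have hC : C a * C a⁻¹ = 1 := by rw [← map_mul, mul_inv_cancel₀ ha, map_one]
  have : (1 - C a * X) * (1 - C a⁻¹ * X)
      = 1 - (C a + C a⁻¹) * X + (C a * C a⁻¹) * X ^ 2 := by ring
  rw [pq, this, hC, ← map_add, one_mul]

theorem pq_mul_fp {a : K} (ha : a ≠ 0) : pq a * fp a = 1 := by
  rw [pq_eq ha, fp, mul_mul_mul_comm, gs_mul, gs_mul, one_mul]

theorem pq_ne_zero (y : K) : pq y ≠ 0 := by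
  intro h
  have := congrArg (PowerSeries.coeff 0) h
  simp [pq] at this

theorem cancel_pq {y : K} {F G : PowerSeries K} (h : pq y * F = pq y * G) : F = G :=
  mul_left_cancel₀ (pq_ne_zero y) h

theorem fp_swap {a b : K} (ha : a ≠ 0) (hb : b ≠ 0) (F : PowerSeries K) :
    fp a * F - fp b * F =
      C ((a + a⁻¹) - (b + b⁻¹)) * X * (fp a * (fp b * F)) := by
  have h1 := pq_mul_fp ha
  have h2 := pq_mul_fp hb
  apply cancel_pq (y := a)
  apply cancel_pq (y := b)
  have e1 : pq b * (pq a * (fp a * F - fp b * F))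
      = C ((a + a⁻¹) - (b + b⁻¹)) * X * F := by
    calc pq b * (pq a * (fp a * F - fp b * F))
        = pq b * ((pq a * fp a) * F) - pq a * ((pq b * fp b) * F) := by ring
      _ = pq b * F - pq a * F := by rw [h1, h2]; ring
      _ = C ((a + a⁻¹) - (b + b⁻¹)) * X * F := by
          rw [pq, pq]; push_cast [map_sub]; ring
  have e2 : pq b * (pq a * (C ((a + a⁻¹) - (b + b⁻¹)) * X * (fp a * (fp b * F))))
      = C ((a + a⁻¹) - (b + b⁻¹)) * X * F := by
    calc pq b * (pq a * (C ((a + a⁻¹) - (b + b⁻¹)) * X * (fp a * (fp b * F))))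
        = C ((a + a⁻¹) - (b + b⁻¹)) * X * ((pq a * fp a) * ((pq b * fp b) * F)) := by ring
      _ = _ := by rw [h1, h2]; ring
  rw [e1, e2]

theorem fp_split {a : K} (ha : a ≠ 0) :
    C (1 - a⁻¹) * ((1 + X) * fp a) = gs a - C a⁻¹ * gs a⁻¹ := by
  have h1 := gs_mul a
  have h2 := gs_mul a⁻¹
  have hC : C a⁻¹ * C a = 1 := by rw [← map_mul, inv_mul_cancel₀ ha, map_one]
  apply cancel_pq (y := a)
  calc pq a * (C (1 - a⁻¹) * ((1 + X) * fp a))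
      = C (1 - a⁻¹) * (1 + X) * (pq a * fp a) := by ring
    _ = C (1 - a⁻¹) * (1 + X) := by rw [pq_mul_fp ha, mul_one]
    _ = (1 - C a⁻¹ * X) * ((1 - C a * X) * gs a)
        - C a⁻¹ * ((1 - C a * X) * ((1 - C a⁻¹ * X) * gs a⁻¹)) := by
        rw [h1, h2, mul_one, mul_one]
        have expand : (1 - C a⁻¹ * X) - C a⁻¹ * (1 - C a * X)
            = (1 - C a⁻¹) + ((C a⁻¹ * C a) - C a⁻¹) * X := by ring
        rw [expand, hC]
        push_cast [map_sub, map_one]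
        ring
    _ = pq a * (gs a - C a⁻¹ * gs a⁻¹) := by rw [pq_eq ha]; ring

theorem czf_sub (e : ℤ) (F G : PowerSeries K) : czf e (F - G) = czf e F - czf e G := by
  rcases le_or_gt 0 e with h | h
  · simp [czf, if_pos h]
  · simp [czf_neg h]

theorem czf_gs (e : ℤ) (he : 0 ≤ e) (a : K) : czf e (gs a) = a ^ e := by
  rw [czf, if_pos he, gs, coeff_mk]
  conv_rhs => rw [show e = (e.toNat : ℤ) by omega]
  rw [zpow_natCast]

/-- the key single-variable splitting, positive case -/
theorem svA_pos {a : K} (ha : a ≠ 0) {m : ℤ} (hm : 1 ≤ m) :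
    a ^ (m - 1) - a ^ (-m) = (1 - a⁻¹) * (czf (m - 1) (fp a) + czf (m - 2) (fp a)) := by
  have h := congrArg (czf (m - 1)) (fp_split ha)
  rw [czf_C_mul, czf_one_add_X, czf_sub, czf_C_mul, czf_gs _ (by omega), czf_gs _ (by omega)] at h
  rw [show m - 1 - 1 = m - 2 by ring] at h
  rw [h]
  have : a⁻¹ * a⁻¹ ^ (m - 1) = a ^ (-m) := by
    rw [inv_zpow' a (m-1), ← zpow_neg_one a, ← zpow_add₀ ha]
    congr 1
    ring
  rw [this]

theorem svA {a : K} (ha : a ≠ 0) (m : ℤ) :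
    a ^ (m - 1) - a ^ (-m) =
      (1 - a⁻¹) * ((Int.sign m : K) * czf (|m| - 1) (fp a)
        + (Int.sign (m - 1) : K) * czf (|m - 1| - 1) (fp a)) := by
  rcases le_or_gt 1 m with hm | hm
  · rw [svA_pos ha hm]
    have h1 : (Int.sign m : K) = 1 := by rw [Int.sign_eq_one_of_pos (by omega)]; norm_num
    have h2 : |m| - 1 = m - 1 := by rw [abs_of_pos (by omega)]
    rw [h1, h2, one_mul]
    congr 1
    rcases eq_or_lt_of_le hm with h | h
    · rw [← h]
      norm_num
      rw [czf_neg (by norm_num)]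
    · have h3 : (Int.sign (m-1) : K) = 1 := by rw [Int.sign_eq_one_of_pos (by omega)]; norm_num
      have h4 : |m - 1| - 1 = m - 2 := by rw [abs_of_pos (by omega)]; ring
      rw [h3, h4, one_mul]
  · -- m ≤ 0, use m' = 1 - m
    have key := svA_pos ha (m := 1 - m) (by omega)
    rw [show (1 - m) - 1 = -m by ring, show -(1-m) = m - 1 by ring] at key
    have hL : a ^ (m - 1) - a ^ (-m) = -(a ^ (-m) - a ^ (m - 1)) := by ring
    rw [hL, key]
    have h2 : |m - 1| - 1 = 1 - m - 1 := by rw [abs_of_neg (by omega)]; ring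
    have h3 : (Int.sign (m-1) : K) = -1 := by
      rw [Int.sign_eq_neg_one_of_neg (by omega)]; norm_num
    rw [h2, h3]
    rcases eq_or_lt_of_le (by omega : m ≤ 0) with h | h
    · rw [h, neg_zero]
      rw [show (1:ℤ) - 0 - 2 = -1 by ring, show (1:ℤ) - 0 - 1 = 0 by ring,
        show |(0:ℤ)| - 1 = -1 by norm_num]
      rw [czf_neg (show (-1:ℤ) < 0 by norm_num), Int.sign_zero]
      push_cast
      ring
    · have h4 : (Int.sign m : K) = -1 := by rw [Int.sign_eq_neg_one_of_neg (by omega)]; norm_num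
      have h5 : |m| - 1 = -m - 2 + 1 := by rw [abs_of_neg (by omega)]; ring
      rw [h4, h5]
      rw [show -m - 2 + 1 = -m - 1 by ring, show (1:ℤ) - m - 1 = -m by ring]
      ring

/-- master Newton-telescoping identity -/
theorem master {x : ℕ → K} (hx : ∀ t, x t ≠ 0) (k : ℕ) :
    fp (x k) = ∑ i ∈ Finset.range (k+1),
      C (∏ t ∈ Finset.range i, ((x k + (x k)⁻¹) - (x t + (x t)⁻¹))) * X ^ i *
        ∏ t ∈ Finset.range (i+1), fp (x t) := by
  set Y : ℕ → K := fun t => x t + (x t)⁻¹ with hY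
  set g : ℕ → PowerSeries K := fun i =>
    C (∏ t ∈ Finset.range i, (Y k - Y t)) * X ^ i *
      ((∏ t ∈ Finset.range i, fp (x t)) * fp (x k)) with hg
  have step : ∀ i, g i - g (i+1)
      = C (∏ t ∈ Finset.range i, (Y k - Y t)) * X ^ i * ∏ t ∈ Finset.range (i+1), fp (x t) := by
    intro i
    have swap := fp_swap (hx i) (hx k) (∏ t ∈ Finset.range i, fp (x t))
    -- swap : fp xi * Φi - fp xk * Φi = C(Yi - Yk) X (fp xi * (fp xk * Φi))
    have hphi : (∏ t ∈ Finset.range (i+1), fp (x t))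
        = (∏ t ∈ Finset.range i, fp (x t)) * fp (x i) := Finset.prod_range_succ _ _
    have key : (∏ t ∈ Finset.range i, fp (x t)) * fp (x k)
        = (∏ t ∈ Finset.range (i+1), fp (x t))
          + C (Y k - Y i) * X * ((∏ t ∈ Finset.range (i+1), fp (x t)) * fp (x k)) := by
      have : fp (x k) * (∏ t ∈ Finset.range i, fp (x t))
          = fp (x i) * (∏ t ∈ Finset.range i, fp (x t))
            - C ((x i + (x i)⁻¹) - (x k + (x k)⁻¹)) * X
              * (fp (x i) * (fp (x k) * (∏ t ∈ Finset.range i, fp (x t)))) := by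
        rw [← swap]; ring
      rw [hphi]
      calc (∏ t ∈ Finset.range i, fp (x t)) * fp (x k)
          = fp (x k) * (∏ t ∈ Finset.range i, fp (x t)) := by ring
        _ = fp (x i) * (∏ t ∈ Finset.range i, fp (x t))
            - C ((x i + (x i)⁻¹) - (x k + (x k)⁻¹)) * X
              * (fp (x i) * (fp (x k) * (∏ t ∈ Finset.range i, fp (x t)))) := this
        _ = _ := by
            rw [show C ((x i + (x i)⁻¹) - (x k + (x k)⁻¹)) = - C (Y k - Y i) by
              rw [← map_neg]; congr 1; rw [hY]; ring]
            ring
    have hP : (∏ t ∈ Finset.range (i+1), (Y k - Y t))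
        = (∏ t ∈ Finset.range i, (Y k - Y t)) * (Y k - Y i) := Finset.prod_range_succ _ _
    calc g i - g (i+1)
        = C (∏ t ∈ Finset.range i, (Y k - Y t)) * X ^ i *
            ((∏ t ∈ Finset.range i, fp (x t)) * fp (x k))
          - C (∏ t ∈ Finset.range (i+1), (Y k - Y t)) * X ^ (i+1) *
            ((∏ t ∈ Finset.range (i+1), fp (x t)) * fp (x k)) := rfl
      _ = _ := by
          rw [key, hP, map_mul]
          ring
  have tele : ∑ i ∈ Finset.range (k+1), (g i - g (i+1)) = g 0 - g (k+1) :=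
    Finset.sum_range_sub' g (k+1)
  have g0 : g 0 = fp (x k) := by simp [hg]
  have gk : g (k+1) = 0 := by
    have : (∏ t ∈ Finset.range (k+1), (Y k - Y t)) = 0 := by
      apply Finset.prod_eq_zero (Finset.self_mem_range_succ k)
      ring
    show C (∏ t ∈ Finset.range (k+1), (Y k - Y t)) * X ^ (k+1) *
      ((∏ t ∈ Finset.range (k+1), fp (x t)) * fp (x k)) = 0
    rw [this, map_zero, zero_mul, zero_mul]
  calc fp (x k) = g 0 - g (k+1) := by rw [g0, gk, sub_zero]
    _ = ∑ i ∈ Finset.range (k+1), (g i - g (i+1)) := tele.symm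
    _ = _ := by
        apply Finset.sum_congr rfl
        intro i _
        exact step i

theorem czf_sum {ι : Type*} (s : Finset ι) (e : ℤ) (F : ι → PowerSeries K) :
    czf e (∑ i ∈ s, F i) = ∑ i ∈ s, czf e (F i) := by
  rcases le_or_gt 0 e with h | h
  · simp [czf, if_pos h]
  · simp [czf_neg h]

theorem extract {x : ℕ → K} (hx : ∀ t, x t ≠ 0) (k : ℕ) (m : ℤ) :
    (Int.sign m : K) * czf (|m| - 1) (fp (x k)) =
      ∑ i ∈ Finset.range (k+1),
        (∏ t ∈ Finset.range i, ((x k + (x k)⁻¹) - (x t + (x t)⁻¹))) *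
          ((Int.sign m : K) * czf (|m| - (i+1)) (∏ t ∈ Finset.range (i+1), fp (x t))) := by
  rcases eq_or_ne m 0 with rfl | hm
  · simp
  · have key := congrArg (czf (|m| - 1)) (master hx k)
    rw [czf_sum] at key
    have : ∀ i ∈ Finset.range (k+1),
        czf (|m| - 1) (C (∏ t ∈ Finset.range i, ((x k + (x k)⁻¹) - (x t + (x t)⁻¹))) * X ^ i *
          ∏ t ∈ Finset.range (i+1), fp (x t))
        = (∏ t ∈ Finset.range i, ((x k + (x k)⁻¹) - (x t + (x t)⁻¹))) *
            czf (|m| - (i+1)) (∏ t ∈ Finset.range (i+1), fp (x t)) := by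
      intro i _
      rw [mul_assoc, czf_C_mul, czf_X_pow_mul]
      congr 2
      ring
    rw [Finset.sum_congr rfl this] at key
    rw [key, Finset.mul_sum]
    apply Finset.sum_congr rfl
    intro i _
    ring


variable {K : Type*} [Field K]

theorem hcomp_eq_coeff (N d : ℕ) (Y : Fin N → K) :
    hcomp N d Y = PowerSeries.coeff d (∏ i, gs (Y i)) := by
  rw [PowerSeries.coeff_prod]
  simp only [gs, coeff_mk]
  rw [hcomp]
  have key : ∀ l ∈ Finset.finsuppAntidiag (univ : Finset (Fin N)) d, ∀ i, l i ≤ d := by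
    intro l hl i
    rw [Finset.mem_finsuppAntidiag] at hl
    calc l i ≤ ∑ j, l j := Finset.single_le_sum (fun j _ => Nat.zero_le _) (mem_univ i)
    _ = d := hl.1
  apply Finset.sum_nbij'
    (i := fun k => Finsupp.equivFunOnFinite.symm (fun i => (k i : ℕ)))
    (j := fun l => fun i => (⟨min (l i) d, by omega⟩ : Fin (d+1)))
  · intro k hk
    rw [Finset.mem_finsuppAntidiag]
    rw [Finset.mem_filter] at hk
    constructor
    · simpa using hk.2
    · intro x _; exact Finset.mem_univ x
  · intro l hl
    rw [Finset.mem_filter]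
    refine ⟨Finset.mem_univ _, ?_⟩
    have h2 := key l hl
    rw [Finset.mem_finsuppAntidiag] at hl
    simp only
    rw [← hl.1]
    apply Finset.sum_congr rfl
    intro i _
    have := h2 i
    omega
  · intro k hk; funext i
    rw [Finset.mem_filter] at hk
    have hki : (k i : ℕ) ≤ d := by
      calc (k i : ℕ) ≤ ∑ j, (k j : ℕ) :=
        Finset.single_le_sum (f := fun j => (k j : ℕ)) (fun j _ => Nat.zero_le _) (mem_univ i)
      _ = d := hk.2
    ext
    simp [Nat.min_eq_left hki]
  · intro l hl; ext i; simp [Nat.min_eq_left (key l hl i)]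
  · intro k hk; apply Finset.prod_congr rfl; intro i _; simp

end Series2
end SeriesLemmas


section BinomPart
open Finset
variable {K : Type*} [Field K]


theorem binom_one_add (x : K) (j : ℕ) :
    (1 + x) ^ j = ∑ p ∈ range (j+1), (j.choose p : K) * x ^ p := by
  rw [add_comm, add_pow]
  apply Finset.sum_congr rfl
  intro p _
  rw [one_pow]
  ring

theorem binom_one_add' (y : K) (M : ℕ) :
    (1 + y) ^ M = ∑ q ∈ range (M+1), (M.choose q : K) * y ^ (M - q) := by
  rw [binom_one_add, ← Finset.sum_range_reflect]
  apply Finset.sum_congr rfl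
  intro q hq
  rw [Finset.mem_range] at hq
  have h1 : M + 1 - 1 - q = M - q := by omega
  rw [h1, Nat.choose_symm (by omega)]

theorem entry_expand (w x : K) (hx : x ≠ 0) (nn l j : ℕ) (hj : j < nn) :
    x ^ (((j:ℤ)+1) - l - nn - 1) * (1+x)^j * (1 + w*x)^(nn-1-j)
      - x ^ (-((j:ℤ)+1) + l + nn) * (1+x⁻¹)^j * (1 + w*x⁻¹)^(nn-1-j)
    = ∑ p ∈ range (j+1), ∑ q ∈ range (nn-j),
        w^(nn-1-j-q) * (j.choose p : K) * ((nn-1-j).choose q : K) *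
          (x^((p:ℤ)-q-l-1) - x^(-((p:ℤ)-q-l))) := by
  set M := nn - 1 - j with hM
  have hMj : nn - j = M + 1 := by omega
  rw [hMj, binom_one_add x j, binom_one_add x⁻¹ j, binom_one_add' (w*x) M,
    binom_one_add' (w*x⁻¹) M, mul_assoc, mul_assoc, Finset.sum_mul_sum, Finset.sum_mul_sum]
  simp only [Finset.mul_sum]
  rw [← Finset.sum_sub_distrib]
  refine Finset.sum_congr rfl fun p hp => ?_
  rw [← Finset.sum_sub_distrib]
  refine Finset.sum_congr rfl fun q hq => ?_
  rw [Finset.mem_range] at hp hq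
  have hMq : ((M - q : ℕ) : ℤ) = (M:ℤ) - q := by omega
  have hxp : x ^ (((j:ℤ)+1) - l - nn - 1) * x ^ p * x ^ (M-q) = x^((p:ℤ)-q-l-1) := by
    rw [← zpow_natCast x p, ← zpow_natCast x (M-q), ← zpow_add₀ hx, ← zpow_add₀ hx, hMq]
    congr 1
    omega
  have hxn : x ^ (-((j:ℤ)+1) + l + nn) * x⁻¹ ^ p * x⁻¹ ^ (M-q) = x^(-((p:ℤ)-q-l)) := by
    rw [← zpow_natCast x⁻¹ p, ← zpow_natCast x⁻¹ (M-q), inv_zpow' x, inv_zpow' x,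
      ← zpow_add₀ hx, ← zpow_add₀ hx, hMq]
    congr 1
    omega
  rw [mul_pow, mul_pow]
  linear_combination ((j.choose p : K) * ((M.choose q : K) * w^(M-q))) * hxp
    - ((j.choose p : K) * ((M.choose q : K) * w^(M-q))) * hxn

end BinomPart

section RFGlue
open PowerSeries Finset
variable (n : ℕ)

theorem Xv_ne_zero (i : Fin n) : Xv n i ≠ 0 := by
  rw [Xv]
  intro h
  rw [map_eq_zero_iff _ (IsFractionRing.injective (MvPolynomial (Fin n ⊕ Unit) ℚ) (RF n))] at h
  exact MvPolynomial.X_ne_zero _ h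

def xxv : ℕ → RF n := fun t => if h : t < n then Xv n ⟨t, h⟩ else 1

theorem xxv_ne_zero (t : ℕ) : xxv n t ≠ 0 := by
  rw [xxv]
  split
  · exact Xv_ne_zero n _
  · exact one_ne_zero

theorem xxv_eq (t : ℕ) (h : t < n) : xxv n t = Xv n ⟨t, h⟩ := dif_pos h

theorem prod_args (i : ℕ) (hi : i < n) :
    (∏ t : Fin (2*(i+1)), gs (args n i hi t)) = ∏ t ∈ range (i+1), fp (xxv n t) := by
  have hpt : ∀ t : Fin (2*(i+1)), gs (args n i hi t)
      = (fun u : ℕ => if u % 2 = 0 then gs (xxv n (u/2)) else gs ((xxv n (u/2))⁻¹)) t.1 := by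
    intro t
    have ht2 : t.1 / 2 < n := by
      have := t.2
      omega
    simp only [args, xxv_eq n _ ht2]
    split <;> rfl
  calc (∏ t : Fin (2*(i+1)), gs (args n i hi t))
      = ∏ u ∈ range (2*(i+1)),
          (fun u : ℕ => if u % 2 = 0 then gs (xxv n (u/2)) else gs ((xxv n (u/2))⁻¹)) u := by
        rw [← Fin.prod_univ_eq_prod_range]
        exact Finset.prod_congr rfl fun t _ => hpt t
    _ = ∏ t ∈ range (i+1), fp (xxv n t) := by
        induction (i+1) with
        | zero => simp
        | succ m ih =>
          rw [show 2*(m+1) = 2*m+1+1 by ring, prod_range_succ, prod_range_succ, ih,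
            prod_range_succ]
          have h1 : (2*m) % 2 = 0 := by omega
          have h2 : (2*m) / 2 = m := by omega
          have h3 : (2*m+1) % 2 = 1 := by omega
          have h4 : (2*m+1) / 2 = m := by omega
          simp only [h1, h2, h3, h4]
          norm_num
          rw [fp]
          ring

theorem hz_eq_czf (N : ℕ) (e : ℤ) (Y : Fin N → RF n) :
    hz N e Y = czf e (∏ t : Fin N, gs (Y t)) := by
  rw [hz, czf]
  split
  · exact hcomp_eq_coeff N e.toNat Y
  · rfl

end RFGlue


section EntryKey
open PowerSeries Finset

theorem sum_Iic_fin {M : Type*} [AddCommMonoid M] {n : ℕ} (k : Fin n) (F : Fin n → M) :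
    ∑ i ∈ Finset.Iic k, F i
      = ∑ i ∈ range (k.1+1), (if h : i < n then F ⟨i, h⟩ else 0) := by
  have hk := k.2
  apply Finset.sum_nbij' (i := fun i => (i : Fin n).1)
    (j := fun i => (⟨min i k.1, by omega⟩ : Fin n))
  · intro a ha
    rw [Finset.mem_Iic] at ha
    rw [Finset.mem_range]
    exact Nat.lt_succ_of_le ha
  · intro a ha
    rw [Finset.mem_range] at ha
    rw [Finset.mem_Iic]
    exact Fin.mk_le_mk.mpr (by omega)
  · intro a ha
    rw [Finset.mem_Iic] at ha
    have : min a.1 k.1 = a.1 := by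
      have := Fin.le_def.mp ha
      omega
    simp [this]
  · intro a ha
    rw [Finset.mem_range] at ha
    simp
    omega
  · intro a ha
    rw [Finset.mem_Iic] at ha
    rw [dif_pos a.2]

theorem bent_eq (n l : ℕ) (i j : Fin n) :
    bent n l i j = ∑ p ∈ range (j.1+1), ∑ q ∈ range (n - j.1),
      wv n ^ (n-1-j.1-q) * (j.1.choose p : RF n) * ((n-1-j.1).choose q : RF n) *
        (((Int.sign ((p:ℤ)-q-l) : ℤ) : RF n) *
            czf (|(p:ℤ)-q-l| - (i.1+1)) (∏ t ∈ range (i.1+1), fp (xxv n t))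
         + ((Int.sign ((p:ℤ)-q-l-1) : ℤ) : RF n) *
            czf (|(p:ℤ)-q-l-1| - (i.1+1)) (∏ t ∈ range (i.1+1), fp (xxv n t))) := by
  rw [bent]
  refine Finset.sum_congr rfl fun p _ => Finset.sum_congr rfl fun q _ => ?_
  rw [hz_eq_czf, hz_eq_czf, prod_args n i.1 i.2]
  rw [Int.abs_eq_natAbs, Int.abs_eq_natAbs]

set_option maxHeartbeats 1000000 in
theorem entry_key (n l : ℕ) (k j : Fin n) :
    Xv n k ^ ((((j : ℕ) : ℤ) + 1) - l - n - 1) * (1 + Xv n k) ^ (j : ℕ) *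
        (1 + wv n * Xv n k) ^ (n - 1 - (j : ℕ)) -
      Xv n k ^ (-(((j : ℕ) : ℤ) + 1) + l + n) * (1 + (Xv n k)⁻¹) ^ (j : ℕ) *
        (1 + wv n * (Xv n k)⁻¹) ^ (n - 1 - (j : ℕ))
    = (1 - (Xv n k)⁻¹) * ∑ i ∈ Finset.Iic k,
        (∏ t ∈ Finset.range i.1,
          ((xxv n k.1 + (xxv n k.1)⁻¹) - (xxv n t + (xxv n t)⁻¹))) * bent n l i j := by
  have hxk : Xv n k = xxv n k.1 := by
    rw [xxv_eq n k.1 k.2]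
  have hxne := Xv_ne_zero n k
  rw [entry_expand (wv n) (Xv n k) hxne n l j.1 j.2]
  rw [sum_Iic_fin k (fun i => (∏ t ∈ Finset.range i.1,
      ((xxv n k.1 + (xxv n k.1)⁻¹) - (xxv n t + (xxv n t)⁻¹))) * bent n l i j)]
  have hbd : ∀ i ∈ range (k.1+1),
      (if h : i < n then (∏ t ∈ range (⟨i,h⟩ : Fin n).1,
          ((xxv n k.1 + (xxv n k.1)⁻¹) - (xxv n t + (xxv n t)⁻¹))) * bent n l ⟨i,h⟩ j else 0)
      = (∏ t ∈ range i,
          ((xxv n k.1 + (xxv n k.1)⁻¹) - (xxv n t + (xxv n t)⁻¹)))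
        * ∑ p ∈ range (j.1+1), ∑ q ∈ range (n - j.1),
            wv n ^ (n-1-j.1-q) * (j.1.choose p : RF n) * ((n-1-j.1).choose q : RF n) *
              (((Int.sign ((p:ℤ)-q-l) : ℤ) : RF n) *
                  czf (|(p:ℤ)-q-l| - (i+1)) (∏ t ∈ range (i+1), fp (xxv n t))
               + ((Int.sign ((p:ℤ)-q-l-1) : ℤ) : RF n) *
                  czf (|(p:ℤ)-q-l-1| - (i+1)) (∏ t ∈ range (i+1), fp (xxv n t))) := by
    intro i hi
    rw [Finset.mem_range] at hi
    have hin : i < n := by omega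
    rw [dif_pos hin, bent_eq]
  rw [Finset.sum_congr rfl hbd]
  -- atomize both sides into triple sums
  have key : ∀ p ∈ range (j.1+1), ∀ q ∈ range (n - j.1),
      (Xv n k ^ ((p:ℤ)-q-l-1) - Xv n k ^ (-((p:ℤ)-q-l)))
      = (1 - (Xv n k)⁻¹) *
        ∑ i ∈ range (k.1+1),
          (∏ t ∈ range i, ((xxv n k.1 + (xxv n k.1)⁻¹) - (xxv n t + (xxv n t)⁻¹))) *
            (((Int.sign ((p:ℤ)-q-l) : ℤ) : RF n) *
                czf (|(p:ℤ)-q-l| - (i+1)) (∏ t ∈ range (i+1), fp (xxv n t))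
             + ((Int.sign ((p:ℤ)-q-l-1) : ℤ) : RF n) *
                czf (|(p:ℤ)-q-l-1| - (i+1)) (∏ t ∈ range (i+1), fp (xxv n t))) := by
    intro p _ q _
    have h1 := svA hxne ((p:ℤ)-q-l)
    have e1 := extract (xxv_ne_zero n) k.1 ((p:ℤ)-q-l)
    have e2 := extract (xxv_ne_zero n) k.1 ((p:ℤ)-q-l-1)
    rw [hxk] at h1 ⊢
    rw [h1, e1, e2, ← Finset.sum_add_distrib]
    congr 1
    apply Finset.sum_congr rfl
    intro i _
    ring
  calc ∑ p ∈ range (j.1+1), ∑ q ∈ range (n - j.1),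
        wv n ^ (n-1-j.1-q) * (j.1.choose p : RF n) * ((n-1-j.1).choose q : RF n) *
          (Xv n k ^ ((p:ℤ)-q-l-1) - Xv n k ^ (-((p:ℤ)-q-l)))
      = ∑ p ∈ range (j.1+1), ∑ q ∈ range (n - j.1), ∑ i ∈ range (k.1+1),
          (1 - (Xv n k)⁻¹) *
          ((∏ t ∈ range i, ((xxv n k.1 + (xxv n k.1)⁻¹) - (xxv n t + (xxv n t)⁻¹))) *
          (wv n ^ (n-1-j.1-q) * (j.1.choose p : RF n) * ((n-1-j.1).choose q : RF n) *
            (((Int.sign ((p:ℤ)-q-l) : ℤ) : RF n) *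
                czf (|(p:ℤ)-q-l| - (i+1)) (∏ t ∈ range (i+1), fp (xxv n t))
             + ((Int.sign ((p:ℤ)-q-l-1) : ℤ) : RF n) *
                czf (|(p:ℤ)-q-l-1| - (i+1)) (∏ t ∈ range (i+1), fp (xxv n t))))) := by
        refine Finset.sum_congr rfl fun p hp => Finset.sum_congr rfl fun q hq => ?_
        rw [key p hp q hq, Finset.mul_sum, Finset.mul_sum]
        apply Finset.sum_congr rfl
        intro i _
        ring
    _ = ∑ i ∈ range (k.1+1), ∑ p ∈ range (j.1+1), ∑ q ∈ range (n - j.1),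
          (1 - (Xv n k)⁻¹) *
          ((∏ t ∈ range i, ((xxv n k.1 + (xxv n k.1)⁻¹) - (xxv n t + (xxv n t)⁻¹))) *
          (wv n ^ (n-1-j.1-q) * (j.1.choose p : RF n) * ((n-1-j.1).choose q : RF n) *
            (((Int.sign ((p:ℤ)-q-l) : ℤ) : RF n) *
                czf (|(p:ℤ)-q-l| - (i+1)) (∏ t ∈ range (i+1), fp (xxv n t))
             + ((Int.sign ((p:ℤ)-q-l-1) : ℤ) : RF n) *
                czf (|(p:ℤ)-q-l-1| - (i+1)) (∏ t ∈ range (i+1), fp (xxv n t))))) := by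
        exact (Finset.sum_congr rfl fun p _ => Finset.sum_comm).trans Finset.sum_comm
    _ = _ := by
        simp only [Finset.mul_sum]

end EntryKey


section FinalGlue
open Finset

theorem prod_Iio_fin {M : Type*} [CommMonoid M] {n : ℕ} (k : Fin n) (F : ℕ → M) :
    ∏ i ∈ Finset.Iio k, F i.1 = ∏ t ∈ Finset.range k.1, F t := by
  have hk := k.2
  apply Finset.prod_nbij' (i := fun i => (i : Fin n).1)
    (j := fun t => (⟨min t k.1, by omega⟩ : Fin n))
  · intro a ha
    rw [Finset.mem_Iio] at ha
    rw [Finset.mem_range]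
    exact ha
  · intro a ha
    rw [Finset.mem_range] at ha
    rw [Finset.mem_Iio]
    exact Fin.mk_lt_mk.mpr (by omega) |>.trans_le (le_refl k) |>.trans_le (le_refl k)
  · intro a ha
    rw [Finset.mem_Iio] at ha
    have : min a.1 k.1 = a.1 := by
      have := Fin.lt_def.mp ha
      omega
    simp [this]
  · intro a ha
    rw [Finset.mem_range] at ha
    simp
    omega
  · intro a _
    rfl

end FinalGlue

/-- First proof of Theorem 3.2, even case: rewriting the determinant via complete
homogeneous symmetric functions. -/

theorem stmt_10 (n l : ℕ) (hn : 1 ≤ n) :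
    (Matrix.of fun i j : Fin n =>
        Xv n i ^ ((((j : ℕ) : ℤ) + 1) - l - n - 1) * (1 + Xv n i) ^ (j : ℕ) *
            (1 + wv n * Xv n i) ^ (n - 1 - (j : ℕ)) -
          Xv n i ^ (-(((j : ℕ) : ℤ) + 1) + l + n) * (1 + (Xv n i)⁻¹) ^ (j : ℕ) *
            (1 + wv n * (Xv n i)⁻¹) ^ (n - 1 - (j : ℕ))).det =
    (∏ i : Fin n, ∏ j ∈ Finset.Ioi i,
        (Xv n j + (Xv n j)⁻¹ - Xv n i - (Xv n i)⁻¹)) *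
      (∏ i : Fin n, (1 - (Xv n i)⁻¹)) *
      (Matrix.of fun i j : Fin n => bent n l i j).det := by
  classical
  set G : ℕ → RF n := fun t => xxv n t + (xxv n t)⁻¹ with hG
  set Dmat : Matrix (Fin n) (Fin n) (RF n) :=
    Matrix.diagonal (fun i : Fin n => 1 - (Xv n i)⁻¹) with hD
  set Nmat : Matrix (Fin n) (Fin n) (RF n) := Matrix.of (fun k i : Fin n =>
    if i ≤ k then ∏ t ∈ Finset.range i.1, (G k.1 - G t) else 0) with hNm
  set Bmat : Matrix (Fin n) (Fin n) (RF n) :=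
    Matrix.of (fun i j : Fin n => bent n l i j) with hB
  have hM : (Matrix.of fun i j : Fin n =>
        Xv n i ^ ((((j : ℕ) : ℤ) + 1) - l - n - 1) * (1 + Xv n i) ^ (j : ℕ) *
            (1 + wv n * Xv n i) ^ (n - 1 - (j : ℕ)) -
          Xv n i ^ (-(((j : ℕ) : ℤ) + 1) + l + n) * (1 + (Xv n i)⁻¹) ^ (j : ℕ) *
            (1 + wv n * (Xv n i)⁻¹) ^ (n - 1 - (j : ℕ)))
      = Dmat * (Nmat * Bmat) := by
    ext k j
    rw [hD, Matrix.diagonal_mul, Matrix.mul_apply]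
    have h1 : ∀ i : Fin n, Nmat k i * Bmat i j
        = if i ∈ Finset.Iic k then (∏ t ∈ Finset.range i.1, (G k.1 - G t)) * bent n l i j else 0 := by
      intro i
      rw [hNm, hB]
      simp only [Matrix.of_apply, Finset.mem_Iic]
      rw [ite_mul, zero_mul]
    rw [Finset.sum_congr rfl (fun i _ => h1 i), Finset.sum_ite_mem, Finset.univ_inter]
    rw [Matrix.of_apply]
    exact entry_key n l k j
  rw [hM, Matrix.det_mul, Matrix.det_mul, hD, Matrix.det_diagonal]
  have htri : Nmat.BlockTriangular OrderDual.toDual := by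
    intro i j hij
    rw [hNm]
    simp only [Matrix.of_apply]
    rw [if_neg]
    exact fun h => absurd (lt_of_lt_of_le hij h) (lt_irrefl _)
  have hdetN : Nmat.det = ∏ k : Fin n, ∏ t ∈ Finset.range k.1, (G k.1 - G t) := by
    rw [Matrix.det_of_lowerTriangular Nmat htri]
    refine Finset.prod_congr rfl fun k _ => ?_
    rw [hNm]
    simp only [Matrix.of_apply]
    rw [if_pos (le_refl k)]
  have hvdm : (∏ i : Fin n, ∏ j ∈ Finset.Ioi i,
        (Xv n j + (Xv n j)⁻¹ - Xv n i - (Xv n i)⁻¹))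
      = ∏ k : Fin n, ∏ t ∈ Finset.range k.1, (G k.1 - G t) := by
    have hYG : ∀ i : Fin n, Xv n i + (Xv n i)⁻¹ = G i.1 := by
      intro i
      rw [hG]
      simp only
      rw [xxv_eq n i.1 i.2]
    calc ∏ i : Fin n, ∏ j ∈ Finset.Ioi i, (Xv n j + (Xv n j)⁻¹ - Xv n i - (Xv n i)⁻¹)
        = ∏ i : Fin n, ∏ j ∈ Finset.Ioi i, (G j.1 - G i.1) := by
          refine Finset.prod_congr rfl fun i _ => Finset.prod_congr rfl fun j _ => ?_
          rw [← hYG i, ← hYG j]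
          ring
      _ = ∏ k : Fin n, ∏ i ∈ Finset.Iio k, (G k.1 - G i.1) := by
          apply Finset.prod_comm'
          intro i j
          simp [Finset.mem_Ioi, Finset.mem_Iio, and_comm]
      _ = _ := by
          refine Finset.prod_congr rfl fun k _ => ?_
          exact prod_Iio_fin k (fun t => G k.1 - G t)
  rw [hvdm, hdetN, hB]
  ring
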